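/- Let ε ∈ ℝ and consider the pseudo-Kahan–Hirota–Kimura map of the isochronous quadratic system S₂ (ẋ = −y + x², ẏ = x(1+y)), given explicitly by Φ̃_{2,ε}(x,y) = ( ((ε²−1)x + 2εy)/E(x,y), (−2εx + (ε²−1)y)/E(x,y) ) with E(x,y) = 2εx − 2ε²y − ε² − 1. Then: (i) H₂(x,y) = (x² + y²)/(1+y)² is a first integral of Φ̃_{2,ε}: H₂(Φ̃_{2,ε}(x,y)) = H₂(x,y) for every (x,y) with E(x,y) ≠ 0, y ≠ −1, and the second component of Φ̃_{2,ε}(x,y) different from −1; and (ii) the vector field X₂(x,y) = (−y + x², x(1+y)) is a Lie symmetry of Φ̃_{2,ε}: X₂(Φ̃_{2,ε}(x,y)) = JΦ̃_{2,ε}(x,y)·X₂(x,y) for every (x,y) with E(x,y) ≠ 0, where JΦ̃_{2,ε} is the Jacobian matrix of Φ̃_{2,ε}. -/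

import Mathlib

/-- Denominator of the pseudo-KHK map `Φ̃_{2,ε}` of the isochronous quadratic
system `S₂`: `ẋ = -y + x²`, `ẏ = x(1+y)`. -/
noncomputable def E2 (ε : ℝ) (q : ℝ × ℝ) : ℝ := 2 * ε * q.1 - 2 * ε ^ 2 * q.2 - ε ^ 2 - 1

/-- The pseudo-Kahan–Hirota–Kimura map `Φ̃_{2,ε}` of the system `S₂`. -/
noncomputable def Phit2 (ε : ℝ) (q : ℝ × ℝ) : ℝ × ℝ :=
  (((ε ^ 2 - 1) * q.1 + 2 * ε * q.2) / E2 ε q,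
   (-2 * ε * q.1 + (ε ^ 2 - 1) * q.2) / E2 ε q)

/-- First integral `H₂(x,y) = (x²+y²)/(1+y)²` of the isochronous system `S₂`. -/
noncomputable def H2 (q : ℝ × ℝ) : ℝ := (q.1 ^ 2 + q.2 ^ 2) / (1 + q.2) ^ 2

/-- The isochronous quadratic vector field `S₂`: `X₂(x,y) = (-y + x², x(1+y))`. -/
noncomputable def X2 (q : ℝ × ℝ) : ℝ × ℝ := (-q.2 + q.1 ^ 2, q.1 * (1 + q.2))

open ContinuousLinearMap

/-- (i) `H₂` is a first integral of the pseudo-KHK map `Φ̃_{2,ε}`, and (ii) the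
vector field `X₂` of the system `S₂` is a Lie symmetry of `Φ̃_{2,ε}`:
`X₂(Φ̃_{2,ε}(p)) = JΦ̃_{2,ε}(p)·X₂(p)` wherever `E ≠ 0`. -/
theorem stmt_19 (ε : ℝ) :
    (∀ q : ℝ × ℝ, E2 ε q ≠ 0 → q.2 ≠ -1 → (Phit2 ε q).2 ≠ -1 →
      H2 (Phit2 ε q) = H2 q) ∧
    (∀ q : ℝ × ℝ, E2 ε q ≠ 0 → X2 (Phit2 ε q) = fderiv ℝ (Phit2 ε) q (X2 q)) := by
  constructor
  · intro q hE hy _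
    have h1 : (1:ℝ) + q.2 ≠ 0 := by intro h; apply hy; linarith
    have hs : (ε^2 + 1 : ℝ) ≠ 0 := by positivity
    have hval : 1 + (Phit2 ε q).2 = (-(ε^2+1) * (1 + q.2)) / E2 ε q := by
      simp only [Phit2, E2] at *
      rw [eq_div_iff hE, add_mul, div_mul_cancel₀ _ hE]
      ring
    have h2 : 1 + (Phit2 ε q).2 ≠ 0 := by
      rw [hval]
      exact div_ne_zero (mul_ne_zero (neg_ne_zero.mpr hs) h1) hE
    simp only [H2]
    rw [div_eq_div_iff (pow_ne_zero 2 h2) (pow_ne_zero 2 h1), hval]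
    simp only [Phit2, E2] at *
    field_simp
    ring
  · intro q hE
    have hF : HasFDerivAt (fun p : ℝ × ℝ => p.1) (fst ℝ ℝ ℝ) q := hasFDerivAt_fst
    have hS : HasFDerivAt (fun p : ℝ × ℝ => p.2) (snd ℝ ℝ ℝ) q := hasFDerivAt_snd
    have hN1 : HasFDerivAt (fun p : ℝ × ℝ => (ε ^ 2 - 1) * p.1 + 2 * ε * p.2)
        ((ε ^ 2 - 1) • fst ℝ ℝ ℝ + (2 * ε) • snd ℝ ℝ ℝ) q :=
      (hF.const_mul _).add (hS.const_mul _)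
    have hN2 : HasFDerivAt (fun p : ℝ × ℝ => -2 * ε * p.1 + (ε ^ 2 - 1) * p.2)
        ((-2 * ε) • fst ℝ ℝ ℝ + (ε ^ 2 - 1) • snd ℝ ℝ ℝ) q :=
      (hF.const_mul _).add (hS.const_mul _)
    have hEd : HasFDerivAt (E2 ε)
        ((2 * ε) • fst ℝ ℝ ℝ - (2 * ε ^ 2) • snd ℝ ℝ ℝ) q := by
      exact (((hF.const_mul (2 * ε)).sub (hS.const_mul (2 * ε ^ 2))).sub_const
        (ε ^ 2)).sub_const 1
    have hInv : HasFDerivAt (fun p : ℝ × ℝ => (E2 ε p)⁻¹)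
        ((smulRight (1 : ℝ →L[ℝ] ℝ) (-(E2 ε q ^ 2)⁻¹)).comp
          ((2 * ε) • fst ℝ ℝ ℝ - (2 * ε ^ 2) • snd ℝ ℝ ℝ)) q :=
      (hasFDerivAt_inv hE).comp q hEd
    have hf : HasFDerivAt (fun p : ℝ × ℝ => ((ε ^ 2 - 1) * p.1 + 2 * ε * p.2) / E2 ε p)
        (((ε ^ 2 - 1) * q.1 + 2 * ε * q.2) •
            ((smulRight (1 : ℝ →L[ℝ] ℝ) (-(E2 ε q ^ 2)⁻¹)).comp
              ((2 * ε) • fst ℝ ℝ ℝ - (2 * ε ^ 2) • snd ℝ ℝ ℝ)) +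
          (E2 ε q)⁻¹ • ((ε ^ 2 - 1) • fst ℝ ℝ ℝ + (2 * ε) • snd ℝ ℝ ℝ)) q := by
      simpa only [div_eq_mul_inv, Pi.mul_def] using hN1.mul hInv
    have hg : HasFDerivAt (fun p : ℝ × ℝ => (-2 * ε * p.1 + (ε ^ 2 - 1) * p.2) / E2 ε p)
        ((-2 * ε * q.1 + (ε ^ 2 - 1) * q.2) •
            ((smulRight (1 : ℝ →L[ℝ] ℝ) (-(E2 ε q ^ 2)⁻¹)).comp
              ((2 * ε) • fst ℝ ℝ ℝ - (2 * ε ^ 2) • snd ℝ ℝ ℝ)) +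
          (E2 ε q)⁻¹ • ((-2 * ε) • fst ℝ ℝ ℝ + (ε ^ 2 - 1) • snd ℝ ℝ ℝ)) q := by
      simpa only [div_eq_mul_inv, Pi.mul_def] using hN2.mul hInv
    have hP : HasFDerivAt (Phit2 ε) _ q := hf.prodMk hg
    rw [hP.fderiv]
    have hE' : (2 * ε * q.1 - 2 * ε ^ 2 * q.2 - ε ^ 2 - 1 : ℝ) ≠ 0 := hE
    refine Prod.ext ?_ ?_ <;>
    · simp only [Phit2, X2, E2, prod_apply, add_apply, smul_apply, comp_apply, sub_apply,
        smulRight_apply, one_apply_eq_self, coe_fst', coe_snd', smul_eq_mul, one_add_div hE'] at *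
      field_simp
      ring
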